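/- Let S be a finite set of open unit hemispheres. If the union of S covers the entire unit sphere S^2, then there exists a subset R of S of cardinality 4, 5, or 6 whose union still covers S^2. -/

import Mathlib

open scoped RealInnerProductSpace

noncomputable section
open Module Submodule Finset

local notation "E3" => EuclideanSpace ℝ (Fin 3)

-- projection preserves inner products against members of W
lemma inner_proj_eq (W : Submodule ℝ E3) (v : E3) {x : E3} (hx : x ∈ W) :
    ⟪(orthogonalProjection W v : E3), x⟫ = ⟪v, x⟫ := by
  have h := Submodule.sub_starProjection_mem_orthogonal (K := W) v
  have h0 : ⟪v - (orthogonalProjection W v : E3), x⟫ = 0 := by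
    rw [real_inner_comm]
    exact (Submodule.mem_orthogonal W _).mp h x hx
  rw [inner_sub_left] at h0
  linarith

lemma zero_mem_hull (A : Finset E3) (W : Submodule ℝ E3) (hW : W ≠ ⊥)
    (hAW : ∀ p ∈ A, p ∈ W)
    (h : ∀ x ∈ W, x ≠ 0 → ∃ p ∈ A, 0 < ⟪p, x⟫) :
    (0 : E3) ∈ convexHull ℝ (A : Set E3) := by
  by_contra h0
  obtain ⟨f, u, hfA, hfu⟩ := geometric_hahn_banach_closed_point
    (convex_convexHull ℝ _) (A.finite_toSet.isCompact_convexHull (𝕜 := ℝ)).isClosed h0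
  have hu0 : u < 0 := by simpa using hfu
  set y := (InnerProductSpace.toDual ℝ E3).symm f with hy
  have hyf : ∀ p : E3, ⟪y, p⟫ = f p := fun p => InnerProductSpace.toDual_symm_apply
  set x := (orthogonalProjection W y : E3) with hxdef
  have hpx : ∀ p ∈ A, ⟪p, x⟫ < 0 := by
    intro p hp
    have : ⟪x, p⟫ = ⟪y, p⟫ := inner_proj_eq W y (hAW p hp)
    have hfp : f p < u := hfA p (subset_convexHull ℝ _ (by exact_mod_cast hp))
    rw [real_inner_comm]
    rw [this, hyf]
    linarith
  -- A is nonempty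
  obtain ⟨x₀, hx₀W, hx₀⟩ := Submodule.exists_mem_ne_zero_of_ne_bot hW
  obtain ⟨p₀, hp₀A, _⟩ := h x₀ hx₀W hx₀
  have hxne : x ≠ 0 := by
    intro hx0
    have := hpx p₀ hp₀A
    rw [hx0, inner_zero_right] at this
    linarith
  obtain ⟨p, hpA, hppos⟩ := h x (orthogonalProjection W y).2 hxne
  exact absurd hppos (not_lt.mpr (le_of_lt (hpx p hpA)))

-- positive span of L
lemma pos_span_of_dep {ι : Type*} [Fintype ι] (z : ι → E3) (w : ι → ℝ)
    (hw : ∀ i, 0 < w i) (hzw : ∑ i, w i • z i = 0) {u : E3}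
    (hu : u ∈ span ℝ (Set.range z)) :
    ∃ a : ι → ℝ, (∀ i, 0 ≤ a i) ∧ u = ∑ i, a i • z i := by
  obtain ⟨b, hb⟩ := (mem_span_range_iff_exists_fun ℝ).mp hu
  cases isEmpty_or_nonempty ι with
  | inl h => exact ⟨b, fun i => (IsEmpty.elim h i), hb.symm⟩
  | inr h =>
    obtain ⟨t, ht⟩ := Finset.exists_le (Finset.univ.image fun i => (-(b i)) / w i)
    refine ⟨fun i => b i + t * w i, fun i => ?_, ?_⟩
    · show 0 ≤ b i + t * w i
      have hti : (-(b i)) / w i ≤ t := ht _ (Finset.mem_image_of_mem _ (Finset.mem_univ i))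
      have := (div_le_iff₀ (hw i)).mp hti
      linarith
    · show u = ∑ i, (b i + t * w i) • z i
      have : ∑ i, (b i + t * w i) • z i
          = (∑ i, b i • z i) + t • (∑ i, w i • z i) := by
        rw [Finset.smul_sum, ← Finset.sum_add_distrib]
        congr 1; ext i; rw [add_smul, smul_smul]
      rw [this, hzw, smul_zero, add_zero, hb]

lemma gen (A : Finset E3) : ∀ n : ℕ, ∀ W : Submodule ℝ E3, finrank ℝ W = n →
    (∀ x ∈ W, x ≠ 0 → ∃ v ∈ A, 0 < ⟪v, x⟫) →
    ∃ B ⊆ A, B.card ≤ 2 * n ∧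
      ∀ y ∈ W, ∃ c : E3 → ℝ, (∀ v, 0 ≤ c v) ∧ y - ∑ v ∈ B, c v • v ∈ Wᗮ := by
  intro n
  induction n using Nat.strong_induction_on with
  | _ n ih =>
    intro W hrank hA
    classical
    rcases Nat.eq_zero_or_pos n with hn | hn
    · subst hn
      have hW : W = ⊥ := Submodule.finrank_eq_zero.mp hrank
      refine ⟨∅, Finset.empty_subset _, by simp, ?_⟩
      intro y hy
      refine ⟨0, fun v => le_refl 0, ?_⟩
      rw [hW] at hy
      have hy0 : y = 0 := (Submodule.mem_bot ℝ).mp hy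
      simp [hy0]
    · have hWbot : W ≠ ⊥ := by
        intro h
        rw [h] at hrank
        simp [finrank_bot] at hrank
        omega
      set prj : E3 → E3 := fun v => (orthogonalProjection W v : E3) with hprj
      set A' : Finset E3 := (A.image prj).erase 0 with hA'def
      have hA'W : ∀ p ∈ A', p ∈ W := by
        intro p hp
        obtain ⟨v, -, rfl⟩ := Finset.mem_image.mp (Finset.mem_of_mem_erase hp)
        exact (orthogonalProjection W v).2
      have hA' : ∀ x ∈ W, x ≠ 0 → ∃ p ∈ A', 0 < ⟪p, x⟫ := by
        intro x hx hx0
        obtain ⟨v, hvA, hv⟩ := hA x hx hx0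
        have hinner : ⟪prj v, x⟫ = ⟪v, x⟫ := inner_proj_eq W v hx
        refine ⟨prj v, Finset.mem_erase.mpr ⟨?_, Finset.mem_image_of_mem _ hvA⟩, by rw [hinner]; exact hv⟩
        intro h0
        rw [h0, inner_zero_left] at hinner
        linarith
      have h0 : (0 : E3) ∈ convexHull ℝ (A' : Set E3) := zero_mem_hull A' W hWbot hA'W hA'
      obtain ⟨ι, hFin, z, w, hzA', hzaff, hwpos, hwsum, hzsum⟩ :=
        eq_pos_convex_span_of_mem_convexHull h0
      have hne : Nonempty ι := by
        rcases isEmpty_or_nonempty ι with h | h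
        · rw [Finset.univ_eq_empty, Finset.sum_empty] at hwsum
          norm_num at hwsum
        · exact h
      set L := span ℝ (Set.range z) with hL
      have hLW : L ≤ W := by
        rw [hL, span_le]
        rintro _ ⟨i, rfl⟩
        exact hA'W _ (hzA' (Set.mem_range_self i))
      set k := finrank ℝ L with hk
      have hk1 : 1 ≤ k := by
        obtain ⟨i⟩ := hne
        have hzi : z i ∈ A' := hzA' (Set.mem_range_self i)
        have hzi0 : z i ≠ 0 := (Finset.mem_erase.mp hzi).1
        have hLne : L ≠ ⊥ := by
          intro h
          exact hzi0 ((Submodule.mem_bot ℝ).mp (h ▸ subset_span (Set.mem_range_self i)))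
        exact Nat.one_le_iff_ne_zero.mpr (fun h0 => hLne (Submodule.finrank_eq_zero.mp h0))
      have hkn : k ≤ n := hrank ▸ Submodule.finrank_mono hLW
      have hcard : Fintype.card ι ≤ k + 1 := by
        have h1 := hzaff.finrank_vectorSpan_add_one
        have h2 : vectorSpan ℝ (Set.range z) ≤ L := by
          rw [vectorSpan_def, span_le]
          rintro _ ⟨p, hp, q, hq, rfl⟩
          exact sub_mem (subset_span hp) (subset_span hq)
        have h3 := Submodule.finrank_mono h2
        omega
      set f : E3 → E3 := fun p => if h : ∃ v ∈ A, prj v = p then h.choose else 0 with hf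
      have hfp : ∀ p ∈ A', f p ∈ A ∧ prj (f p) = p := by
        intro p hp
        obtain ⟨v, hv, hvp⟩ := Finset.mem_image.mp (Finset.mem_of_mem_erase hp)
        have hex : ∃ v ∈ A, prj v = p := ⟨v, hv, hvp⟩
        have : f p = hex.choose := by rw [hf]; exact dif_pos hex
        rw [this]
        exact hex.choose_spec
      have hfz : ∀ i : ι, f (z i) ∈ A ∧ prj (f (z i)) = z i :=
        fun i => hfp _ (hzA' (Set.mem_range_self i))
      have hfinj : ∀ i j : ι, f (z i) = f (z j) → i = j := by
        intro i j hij
        apply hzaff.injective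
        rw [← (hfz i).2, ← (hfz j).2, hij]
      set BC : Finset E3 := Finset.image (fun i => f (z i)) Finset.univ with hBC
      have hBCA : BC ⊆ A := by
        intro v hv
        obtain ⟨i, -, rfl⟩ := Finset.mem_image.mp hv
        exact (hfz i).1
      have hBCcard : BC.card ≤ k + 1 :=
        le_trans Finset.card_image_le (by rw [Finset.card_univ]; exact hcard)
      set W' : Submodule ℝ E3 := Lᗮ ⊓ W with hW'
      have hm : finrank ℝ W' = n - k :=
        Submodule.finrank_add_inf_finrank_orthogonal' hLW (by rw [← hk, hrank]; omega)
      obtain ⟨B', hB'A, hB'card, hB'rep⟩ :=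
        ih (n - k) (by omega) W' hm (fun x hx hx0 => hA x ((Submodule.mem_inf.mp hx).2) hx0)
      refine ⟨BC ∪ B', Finset.union_subset hBCA hB'A, ?_, ?_⟩
      · have := Finset.card_union_le BC B'
        omega
      · intro y hyW
        set x' : E3 := (orthogonalProjection W' y : E3) with hx'
        obtain ⟨c', hc'0, hd⟩ := hB'rep x' (orthogonalProjection W' y).2
        have h1 : (L ⊔ Wᗮ)ᗮ = W' := by
          rw [← Submodule.inf_orthogonal, Submodule.orthogonal_orthogonal, hW']
        have hperp : W'ᗮ = L ⊔ Wᗮ := by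
          rw [← h1, Submodule.orthogonal_orthogonal]
        rw [hperp] at hd
        obtain ⟨l, hl, e, he, hle⟩ := Submodule.mem_sup.mp hd
        have hx'W : x' ∈ W := ((Submodule.mem_inf.mp (orthogonalProjection W' y).2).2)
        have hyx' : y - x' ∈ L := by
          have h2 : y - x' ∈ W'ᗮ := Submodule.sub_starProjection_mem_orthogonal (K := W') y
          rw [hperp] at h2
          obtain ⟨l₂, hl₂, e₂, he₂, hle₂⟩ := Submodule.mem_sup.mp h2
          have hWe₂ : e₂ ∈ W := by
            have h3 : e₂ = (y - x') - l₂ := by rw [← hle₂]; abel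
            rw [h3]
            exact sub_mem (sub_mem hyW hx'W) (hLW hl₂)
          have h4 : e₂ = 0 :=
            (Submodule.disjoint_def.mp (Submodule.orthogonal_disjoint W)) e₂ hWe₂ he₂
          rw [← hle₂, h4, add_zero]
          exact hl₂
        have hu : l + (y - x') ∈ L := add_mem hl hyx'
        rw [hL] at hu
        obtain ⟨a, ha0, hau⟩ := pos_span_of_dep z w hwpos hzsum hu
        set α : E3 → ℝ := fun p => if h : ∃ i, z i = p then a h.choose else 0 with hα
        have hα0 : ∀ p, 0 ≤ α p := by
          intro p
          rw [hα]
          dsimp only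
          split
          · exact ha0 _
          · exact le_refl 0
        have hαz : ∀ i, α (z i) = a i := by
          intro i
          have hex : ∃ j, z j = z i := ⟨i, rfl⟩
          have h5 : α (z i) = a hex.choose := by rw [hα]; exact dif_pos hex
          rw [h5]
          exact congrArg a (hzaff.injective hex.choose_spec)
        set c : E3 → ℝ := fun v =>
          (if v ∈ B' then c' v else 0) + (if v ∈ BC then α (prj v) else 0) with hc
        refine ⟨c, ?_, ?_⟩
        · intro v
          rw [hc]
          dsimp only
          apply add_nonneg
          · split
            · exact hc'0 v
            · exact le_refl 0
          · split
            · exact hα0 _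
            · exact le_refl 0
        · have hsum : ∑ v ∈ BC ∪ B', c v • v
              = (∑ v ∈ B', c' v • v) + (∑ i, a i • f (z i)) := by
            have hsplit : ∑ v ∈ BC ∪ B', c v • v
                = (∑ v ∈ BC ∪ B', (if v ∈ B' then c' v else 0) • v)
                  + (∑ v ∈ BC ∪ B', (if v ∈ BC then α (prj v) else 0) • v) := by
              rw [← Finset.sum_add_distrib]
              exact Finset.sum_congr rfl (fun v _ => by rw [hc]; dsimp only; rw [add_smul]
                )
            have hpart1 : ∑ v ∈ BC ∪ B', (if v ∈ B' then c' v else 0) • v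
                = ∑ v ∈ B', c' v • v := by
              rw [← Finset.sum_subset Finset.subset_union_right
                (fun x _ hx => by rw [if_neg hx, zero_smul])]
              exact Finset.sum_congr rfl (fun x hx => by rw [if_pos hx])
            have hpart2 : ∑ v ∈ BC ∪ B', (if v ∈ BC then α (prj v) else 0) • v
                = ∑ i, a i • f (z i) := by
              rw [← Finset.sum_subset Finset.subset_union_left
                (fun x _ hx => by rw [if_neg hx, zero_smul])]
              rw [show (∑ v ∈ BC, (if v ∈ BC then α (prj v) else 0) • v)
                  = ∑ v ∈ BC, α (prj v) • v from
                Finset.sum_congr rfl (fun x hx => by rw [if_pos hx])]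
              rw [hBC, Finset.sum_image (fun i _ j _ h => hfinj i j h)]
              exact Finset.sum_congr rfl (fun i _ => by rw [(hfz i).2, hαz])
            rw [hsplit, hpart1, hpart2]
          have hle' : (l + e) + (∑ v ∈ B', c' v • v) = x' := by
            rw [eq_sub_iff_add_eq] at hle
            exact hle
          have hy2 : y = (∑ v ∈ B', c' v • v) + (∑ i, a i • z i) + e := by
            rw [← hau, ← hle']
            abel
          have hfinal : y - ∑ v ∈ BC ∪ B', c v • v
              = e - ∑ i, a i • (f (z i) - z i) := by
            rw [hsum, hy2]
            have h6 : ∑ i, a i • (f (z i) - z i)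
                = (∑ i, a i • f (z i)) - ∑ i, a i • z i := by
              rw [← Finset.sum_sub_distrib]
              exact Finset.sum_congr rfl (fun i _ => by rw [smul_sub])
            rw [h6]
            abel
          rw [hfinal]
          refine sub_mem he (sum_mem (fun i _ => smul_mem _ _ ?_))
          have h7 : f (z i) - (orthogonalProjection W (f (z i)) : E3) ∈ Wᗮ :=
            Submodule.sub_starProjection_mem_orthogonal (K := W) (f (z i))
          rw [show (orthogonalProjection W (f (z i)) : E3) = z i from (hfz i).2] at h7
          exact h7

/-- The unit sphere `S² ⊆ ℝ³`. -/
noncomputable def unitSphere : Set (EuclideanSpace ℝ (Fin 3)) := Metric.sphere 0 1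

/-- The open unit hemisphere of `S²` determined by a (unit) vector `v`. -/
noncomputable def openHemisphere (v : EuclideanSpace ℝ (Fin 3)) :
    Set (EuclideanSpace ℝ (Fin 3)) := {x ∈ unitSphere | 0 < ⟪v, x⟫}

lemma cover_iff (B : Finset E3) :
    (unitSphere ⊆ ⋃ v ∈ B, openHemisphere v) ↔ ∀ x : E3, x ≠ 0 → ∃ v ∈ B, 0 < ⟪v, x⟫ := by
  constructor
  · intro h x hx
    have hnx : ‖x‖ ≠ 0 := norm_ne_zero_iff.mpr hx
    have hmem : ‖x‖⁻¹ • x ∈ unitSphere := by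
      simp only [unitSphere, Metric.mem_sphere, dist_zero_right, norm_smul, norm_inv, norm_norm]
      field_simp
    obtain ⟨U, ⟨v, rfl⟩, hU⟩ := h hmem
    simp only [Set.mem_iUnion, exists_prop] at hU
    obtain ⟨hvB, hx2⟩ := hU
    refine ⟨v, hvB, ?_⟩
    have hin : 0 < ⟪v, ‖x‖⁻¹ • x⟫ := hx2.2
    rw [real_inner_smul_right] at hin
    by_contra hle
    push_neg at hle
    have : ‖x‖⁻¹ * ⟪v, x⟫ ≤ 0 :=
      mul_nonpos_of_nonneg_of_nonpos (by positivity) hle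
    linarith
  · intro h x hx
    have hx1 : ‖x‖ = 1 := by simpa [unitSphere] using hx
    have hx0 : x ≠ 0 := by intro h0; rw [h0] at hx1; simp at hx1
    obtain ⟨v, hvB, hv⟩ := h x hx0
    exact Set.mem_biUnion hvB ⟨hx, hv⟩

lemma four_le_card (B : Finset E3)
    (hcov : ∀ x : E3, x ≠ 0 → ∃ v ∈ B, 0 < ⟪v, x⟫) : 4 ≤ B.card := by
  classical
  by_contra hlt
  push_neg at hlt
  have hB3 : B.card ≤ 3 := by omega
  have htne : (⊤ : Submodule ℝ E3) ≠ ⊥ := by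
    intro h
    have : (EuclideanSpace.single 0 (1:ℝ) : E3) ∈ (⊤ : Submodule ℝ E3) := trivial
    rw [h] at this
    have h1 : (EuclideanSpace.single 0 (1:ℝ) : E3) = 0 := (Submodule.mem_bot ℝ).mp this
    have := congrArg (fun v : E3 => v 0) h1
    simp [EuclideanSpace.single] at this
  have h0 : (0 : E3) ∈ convexHull ℝ (B : Set E3) :=
    zero_mem_hull B ⊤ htne (fun p _ => trivial) (fun x _ hx0 => hcov x hx0)
  obtain ⟨ι, hFin, z, w, hzB, hzaff, hwpos, hwsum, hzsum⟩ :=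
    eq_pos_convex_span_of_mem_convexHull h0
  have hne : Nonempty ι := by
    rcases isEmpty_or_nonempty ι with h | h
    · rw [Finset.univ_eq_empty, Finset.sum_empty] at hwsum
      norm_num at hwsum
    · exact h
  obtain ⟨i₀⟩ := hne
  have hzi₀B : z i₀ ∈ B := by exact_mod_cast hzB (Set.mem_range_self i₀)
  -- z i₀ ∈ span of B.erase (z i₀)
  have hsp : z i₀ ∈ span ℝ ((B.erase (z i₀) : Finset E3) : Set E3) := by
    have hw0 : w i₀ ≠ 0 := ne_of_gt (hwpos i₀)
    have hsum' : w i₀ • z i₀ = -∑ i ∈ Finset.univ.erase i₀, w i • z i := by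
      rw [eq_neg_iff_add_eq_zero, Finset.add_sum_erase Finset.univ (fun i => w i • z i) (Finset.mem_univ i₀)]
      exact hzsum
    have hz0 : z i₀ = ∑ i ∈ Finset.univ.erase i₀, (-(w i) / w i₀) • z i := by
      have hinv : (w i₀)⁻¹ • (w i₀ • z i₀) = z i₀ := by
        rw [smul_smul, inv_mul_cancel₀ hw0, one_smul]
      rw [← hinv, hsum', smul_neg, Finset.smul_sum, ← Finset.sum_neg_distrib]
      exact Finset.sum_congr rfl (fun i _ => by
        rw [smul_smul, ← neg_smul]
        congr 1
        field_simp)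
    have hmem : (∑ i ∈ Finset.univ.erase i₀, (-(w i) / w i₀) • z i)
        ∈ span ℝ ((B.erase (z i₀) : Finset E3) : Set E3) := by
      refine sum_mem (fun i hi => smul_mem _ _ (subset_span ?_))
      have hiB : z i ∈ B := by exact_mod_cast hzB (Set.mem_range_self i)
      have hine : z i ≠ z i₀ := fun h =>
        (Finset.mem_erase.mp hi).1 (hzaff.injective h)
      exact_mod_cast Finset.mem_erase.mpr ⟨hine, hiB⟩
    rwa [← hz0] at hmem
  have hspan : span ℝ (B : Set E3) = span ℝ ((B.erase (z i₀) : Finset E3) : Set E3) := by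
    have : (B : Set E3) = insert (z i₀) ((B.erase (z i₀) : Finset E3) : Set E3) := by
      rw [← Finset.coe_insert, Finset.insert_erase hzi₀B]
    rw [this, Submodule.span_insert_eq_span hsp]
  have hrk : finrank ℝ (span ℝ (B : Set E3)) ≤ 2 := by
    rw [hspan]
    calc finrank ℝ (span ℝ ((B.erase (z i₀) : Finset E3) : Set E3))
        ≤ (B.erase (z i₀)).card := finrank_span_finset_le_card _
      _ ≤ 2 := by rw [Finset.card_erase_of_mem hzi₀B]; omega
  have horth : (span ℝ (B : Set E3))ᗮ ≠ ⊥ := by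
    intro h
    have := Submodule.finrank_add_finrank_orthogonal (K := span ℝ (B : Set E3))
    rw [h, finrank_bot] at this
    have h3 : finrank ℝ E3 = 3 := by
      simp [finrank_euclideanSpace, Fintype.card_fin]
    omega
  obtain ⟨x, hxorth, hx0⟩ := Submodule.exists_mem_ne_zero_of_ne_bot horth
  obtain ⟨v, hvB, hv⟩ := hcov x hx0
  have : ⟪v, x⟫ = 0 :=
    (Submodule.mem_orthogonal _ _).mp hxorth v (subset_span (by exact_mod_cast hvB))
  linarith

/-- If a finite set of open unit hemispheres covers the unit sphere `S²`,
then four, five or six of them already cover it. -/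
theorem hemispheres_cover_sphere
    (S : Finset (EuclideanSpace ℝ (Fin 3))) (hS : ∀ v ∈ S, ‖v‖ = 1)
    (hcover : unitSphere ⊆ ⋃ v ∈ S, openHemisphere v) :
    ∃ R ⊆ S, (R.card = 4 ∨ R.card = 5 ∨ R.card = 6) ∧
      unitSphere ⊆ ⋃ v ∈ R, openHemisphere v := by
  have hyp : ∀ x : E3, x ≠ 0 → ∃ v ∈ S, 0 < ⟪v, x⟫ := (cover_iff S).mp hcover
  have htop : finrank ℝ (⊤ : Submodule ℝ E3) = 3 := by
    rw [finrank_top]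
    simp [finrank_euclideanSpace, Fintype.card_fin]
  obtain ⟨B, hBS, hB6, hrep⟩ := gen S 3 ⊤ htop (fun x _ hx0 => hyp x hx0)
  have covB : ∀ x : E3, x ≠ 0 → ∃ v ∈ B, 0 < ⟪v, x⟫ := by
    intro x hx0
    obtain ⟨c, hc0, hmem⟩ := hrep x trivial
    rw [Submodule.top_orthogonal_eq_bot] at hmem
    have hxeq : x = ∑ v ∈ B, c v • v := by
      have := (Submodule.mem_bot ℝ).mp hmem
      rw [sub_eq_zero] at this
      exact this
    by_contra hno
    push_neg at hno
    have hpos : 0 < ⟪x, x⟫ := by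
      rw [real_inner_self_eq_norm_mul_norm]
      have : ‖x‖ ≠ 0 := norm_ne_zero_iff.mpr hx0
      positivity
    have : ⟪x, x⟫ ≤ 0 := by
      nth_rewrite 1 [hxeq]
      rw [sum_inner]
      refine Finset.sum_nonpos (fun v hv => ?_)
      rw [real_inner_smul_left]
      exact mul_nonpos_of_nonneg_of_nonpos (hc0 v) (hno v hv)
    linarith
  have h4 : 4 ≤ B.card := four_le_card B covB
  exact ⟨B, hBS, by omega, (cover_iff B).mpr covB⟩

end
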